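/- Let R = ℚ[a₁,…,a₁₂] and let I ⊆ R be the ideal generated by the nine polynomials 5a₂ + 3a₇, a₃ + 9a₈, 2a₂a₅ − 2a₁a₆ + (1/5)a₄, 10a₁ − a₁₁, 5a₂ − 9a₁₂, 6a₂a₉ − 6a₁a₁₀ − a₃, a₅ + a₁₀, 5a₆ + a₁₁, 2a₆a₉ − 2a₅a₁₀ − (1/3)a₇ − (1/5)a₁₂. Then the ℚ-algebra homomorphism ℚ[x, y, z] → R/I sending x, y, z to the classes of a₁, a₅, a₉ is an isomorphism of ℚ-algebras; in particular R/I is isomorphic to a polynomial ring in three variables over ℚ. -/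

import Mathlib

open MvPolynomial
open Fin.NatCast

/-- `a i` is the variable `aᵢ` (for `1 ≤ i ≤ 12`) of `ℚ[a₁,…,a₁₂]`. -/
noncomputable def a (i : ℕ) : MvPolynomial (Fin 12) ℚ := X ((i - 1 : ℕ) : Fin 12)

/-- The ideal of the nine equations cutting out the affine chart `V₁₂` of the
Mukai–Umemura threefold inside the standard affine Schubert cell of `Gr(3,7)`. -/
noncomputable def I : Ideal (MvPolynomial (Fin 12) ℚ) :=
  Ideal.span
    {5 * a 2 + 3 * a 7,
     a 3 + 9 * a 8,
     2 * a 2 * a 5 - 2 * a 1 * a 6 + C (1 / 5 : ℚ) * a 4,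
     10 * a 1 - a 11,
     5 * a 2 - 9 * a 12,
     6 * a 2 * a 9 - 6 * a 1 * a 10 - a 3,
     a 5 + a 10,
     5 * a 6 + a 11,
     2 * a 6 * a 9 - 2 * a 5 * a 10 - C (1 / 3 : ℚ) * a 7 - C (1 / 5 : ℚ) * a 12}

/-- The ℚ-algebra homomorphism `ℚ[x,y,z] → R/I` sending `x, y, z` to the classes of
`a₁, a₅, a₉`. -/
noncomputable def φ : MvPolynomial (Fin 3) ℚ →ₐ[ℚ] MvPolynomial (Fin 12) ℚ ⧸ I :=
  MvPolynomial.aeval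
    ![Ideal.Quotient.mk I (a 1), Ideal.Quotient.mk I (a 5), Ideal.Quotient.mk I (a 9)]

/-! ### Auxiliary material -/

noncomputable abbrev SS := MvPolynomial (Fin 3) ℚ
noncomputable abbrev QQ := MvPolynomial (Fin 12) ℚ ⧸ I

/-- The values of the inverse map on the twelve variables. -/
noncomputable def w : Fin 12 → SS
| 0 => X 0
| 1 => C (1/2 : ℚ) * (18 * X 0 * X 2 - 9 * X 1 ^ 2)
| 2 => 54 * X 0 * X 2 ^ 2 - 27 * X 1 ^ 2 * X 2 + 6 * X 0 * X 1
| 3 => -(90 * X 0 * X 1 * X 2) + 45 * X 1 ^ 3 - 20 * X 0 ^ 2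
| 4 => X 1
| 5 => -(2 * X 0)
| 6 => C (1/2 : ℚ) * (15 * X 1 ^ 2 - 30 * X 0 * X 2)
| 7 => C (1/3 : ℚ) * (-(18 * X 0 * X 2 ^ 2) + 9 * X 1 ^ 2 * X 2 - 2 * X 0 * X 1)
| 8 => X 2
| 9 => -(X 1)
| 10 => 10 * X 0
| 11 => C (1/2 : ℚ) * (10 * X 0 * X 2 - 5 * X 1 ^ 2)

noncomputable def ψ : MvPolynomial (Fin 12) ℚ →ₐ[ℚ] SS := aeval w

lemma hp2 : (C (1/2 : ℚ) : SS) * 2 = 1 := by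
  rw [← map_ofNat (C : ℚ →+* SS) 2, ← C_mul]; norm_num
lemma ht3 : (C (1/3 : ℚ) : SS) * 3 = 1 := by
  rw [← map_ofNat (C : ℚ →+* SS) 3, ← C_mul]; norm_num
lemma hf5 : (C (1/5 : ℚ) : SS) * 5 = 1 := by
  rw [← map_ofNat (C : ℚ →+* SS) 5, ← C_mul]; norm_num

lemma psi_vanish : ∀ p ∈ I, ψ p = 0 := by
  have hle : I ≤ RingHom.ker (ψ : MvPolynomial (Fin 12) ℚ →+* SS) := by
    rw [I, Ideal.span_le]
    rintro p hp
    simp only [Set.mem_insert_iff, Set.mem_singleton_iff] at hp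
    rcases hp with rfl | rfl | rfl | rfl | rfl | rfl | rfl | rfl | rfl <;>
        rw [SetLike.mem_coe, RingHom.mem_ker] <;>
        simp only [a, map_add, map_sub, map_mul, map_ofNat, AlgHom.coe_toRingHom,
          ψ, aeval_X, aeval_C]
    · norm_num [w]
      ring
    · norm_num [w]
      linear_combination (-(54 * (X 0 : SS) * X 2 ^ 2 - 27 * X 1 ^ 2 * X 2 + 6 * X 0 * X 1)) * ht3
    · norm_num [w]
      linear_combination (18 * (X 0 : SS) * X 1 * X 2 - 9 * X 1 ^ 3) * hp2 - (18 * (X 0 : SS) * X 1 * X 2 - 9 * X 1 ^ 3 + 4 * X 0 ^ 2) * hf5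
    · norm_num [w]
    · norm_num [w]
      ring
    · norm_num [w]
      linear_combination (54 * (X 0 : SS) * X 2 ^ 2 - 27 * X 1 ^ 2 * X 2) * hp2
    · norm_num [w]
    · norm_num [w]
      ring
    · norm_num [w]
      linear_combination (4 * (X 0 : SS) * X 2 - 2 * X 1 ^ 2) * hp2 - (C (1/2 : ℚ) * (5 * (X 1 : SS) ^ 2 - 10 * X 0 * X 2)) * ht3 - (C (1/2 : ℚ) * (2 * (X 0 : SS) * X 2 - X 1 ^ 2)) * hf5
  intro p hp
  exact hle hp

noncomputable def ψ' : QQ →ₐ[ℚ] SS := Ideal.Quotient.liftₐ I ψ psi_vanish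

lemma left_inv : ψ'.comp φ = AlgHom.id ℚ SS := by
  apply MvPolynomial.algHom_ext
  intro i
  fin_cases i
  all_goals (simp only [φ, ψ', ψ, a, AlgHom.comp_apply, aeval_X]; erw [Ideal.Quotient.liftₐ_apply, Ideal.Quotient.lift_mk]; simp [w])


lemma scaled_mem {A : Type*} [CommRing A] [Algebra ℚ A] {T : Subalgebra ℚ A} (c : ℚ)
    (hc : c ≠ 0) {q : A} (h : algebraMap ℚ A c * q ∈ T) : q ∈ T := by
  have h2 := T.smul_mem h c⁻¹
  rwa [Algebra.smul_def, ← mul_assoc, ← map_mul, inv_mul_cancel₀ hc, map_one, one_mul] at h2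

set_option maxHeartbeats 2000000 in
lemma surj : Function.Surjective φ := by
  have hnum : ∀ n : ℚ, (algebraMap ℚ QQ n) ∈ φ.range := fun n => Subalgebra.algebraMap_mem _ n
  have hx : Ideal.Quotient.mk I (a 1) ∈ φ.range := ⟨X 0, by simp [φ]⟩
  have hy : Ideal.Quotient.mk I (a 5) ∈ φ.range := ⟨X 1, by simp [φ]⟩
  have hz : Ideal.Quotient.mk I (a 9) ∈ φ.range := ⟨X 2, by simp [φ]⟩
  have hmemI : ∀ p ∈ ({5 * a 2 + 3 * a 7,
     a 3 + 9 * a 8,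
     2 * a 2 * a 5 - 2 * a 1 * a 6 + C (1 / 5 : ℚ) * a 4,
     10 * a 1 - a 11,
     5 * a 2 - 9 * a 12,
     6 * a 2 * a 9 - 6 * a 1 * a 10 - a 3,
     a 5 + a 10,
     5 * a 6 + a 11,
     2 * a 6 * a 9 - 2 * a 5 * a 10 - C (1 / 3 : ℚ) * a 7 - C (1 / 5 : ℚ) * a 12} :
       Set (MvPolynomial (Fin 12) ℚ)), Ideal.Quotient.mk I p = 0 := by
    intro p hp
    exact Ideal.Quotient.eq_zero_iff_mem.mpr (by rw [I]; exact Ideal.subset_span hp)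
  have he1 := hmemI (5 * a 2 + 3 * a 7) (Set.mem_insert _ _)
  have he2 := hmemI (a 3 + 9 * a 8) (Set.mem_insert_of_mem _ (Set.mem_insert _ _))
  have he3 := hmemI (2 * a 2 * a 5 - 2 * a 1 * a 6 + C (1 / 5 : ℚ) * a 4) (Set.mem_insert_of_mem _ (Set.mem_insert_of_mem _ (Set.mem_insert _ _)))
  have he4 := hmemI (10 * a 1 - a 11) (Set.mem_insert_of_mem _ (Set.mem_insert_of_mem _ (Set.mem_insert_of_mem _ (Set.mem_insert _ _))))
  have he5 := hmemI (5 * a 2 - 9 * a 12) (Set.mem_insert_of_mem _ (Set.mem_insert_of_mem _ (Set.mem_insert_of_mem _ (Set.mem_insert_of_mem _ (Set.mem_insert _ _)))))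
  have he6 := hmemI (6 * a 2 * a 9 - 6 * a 1 * a 10 - a 3) (Set.mem_insert_of_mem _ (Set.mem_insert_of_mem _ (Set.mem_insert_of_mem _ (Set.mem_insert_of_mem _ (Set.mem_insert_of_mem _ (Set.mem_insert _ _))))))
  have he7 := hmemI (a 5 + a 10) (Set.mem_insert_of_mem _ (Set.mem_insert_of_mem _ (Set.mem_insert_of_mem _ (Set.mem_insert_of_mem _ (Set.mem_insert_of_mem _ (Set.mem_insert_of_mem _ (Set.mem_insert _ _)))))))
  have he8 := hmemI (5 * a 6 + a 11) (Set.mem_insert_of_mem _ (Set.mem_insert_of_mem _ (Set.mem_insert_of_mem _ (Set.mem_insert_of_mem _ (Set.mem_insert_of_mem _ (Set.mem_insert_of_mem _ (Set.mem_insert_of_mem _ (Set.mem_insert _ _))))))))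
  have he9 := hmemI (2 * a 6 * a 9 - 2 * a 5 * a 10 - C (1 / 3 : ℚ) * a 7 - C (1 / 5 : ℚ) * a 12)
    (Set.mem_insert_of_mem _ (Set.mem_insert_of_mem _ (Set.mem_insert_of_mem _ (Set.mem_insert_of_mem _ (Set.mem_insert_of_mem _ (Set.mem_insert_of_mem _ (Set.mem_insert_of_mem _ (Set.mem_insert_of_mem _ (Set.mem_singleton _)))))))))
  simp only [map_add, map_sub, map_mul, map_ofNat] at he1 he2 he3 he4 he5 he6 he7 he8 he9
  have hRu : (C (1/3 : ℚ) : MvPolynomial (Fin 12) ℚ) * 3 = 1 := by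
    rw [← map_ofNat (C : ℚ →+* MvPolynomial (Fin 12) ℚ) 3, ← C_mul]; norm_num
  have hRv : (C (1/5 : ℚ) : MvPolynomial (Fin 12) ℚ) * 5 = 1 := by
    rw [← map_ofNat (C : ℚ →+* MvPolynomial (Fin 12) ℚ) 5, ← C_mul]; norm_num
  have hu : Ideal.Quotient.mk I (C (1/3 : ℚ)) * 3 = 1 := by
    rw [← map_ofNat (Ideal.Quotient.mk I) 3, ← map_mul, hRu, map_one]
  have hv : Ideal.Quotient.mk I (C (1/5 : ℚ)) * 5 = 1 := by
    rw [← map_ofNat (Ideal.Quotient.mk I) 5, ← map_mul, hRv, map_one]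
  have s11 : Ideal.Quotient.mk I (a 11) = 10 * Ideal.Quotient.mk I (a 1) := by linear_combination -he4
  have s10 : Ideal.Quotient.mk I (a 10) = -Ideal.Quotient.mk I (a 5) := by linear_combination he7
  have s6 : Ideal.Quotient.mk I (a 6) = -(2 * Ideal.Quotient.mk I (a 1)) := by
    linear_combination Ideal.Quotient.mk I (C (1/5 : ℚ)) * he8 + Ideal.Quotient.mk I (C (1/5 : ℚ)) * he4 -
      (Ideal.Quotient.mk I (a 6) + 2 * Ideal.Quotient.mk I (a 1)) * hv
  have s2 : (20 : QQ) * Ideal.Quotient.mk I (a 2) =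
      180 * (Ideal.Quotient.mk I (a 1) * Ideal.Quotient.mk I (a 9)) - 90 * Ideal.Quotient.mk I (a 5) ^ 2 := by
    linear_combination 45 * he9 + 15 * Ideal.Quotient.mk I (a 7) * hu + 9 * Ideal.Quotient.mk I (a 12) * hv + 5 * he1 - he5 -
      90 * Ideal.Quotient.mk I (a 9) * s6 + 90 * Ideal.Quotient.mk I (a 5) * s10
  have s7 : (12 : QQ) * Ideal.Quotient.mk I (a 7) =
      90 * Ideal.Quotient.mk I (a 5) ^ 2 - 180 * (Ideal.Quotient.mk I (a 1) * Ideal.Quotient.mk I (a 9)) := by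
    linear_combination 4 * he1 - s2
  have s12 : (36 : QQ) * Ideal.Quotient.mk I (a 12) =
      180 * (Ideal.Quotient.mk I (a 1) * Ideal.Quotient.mk I (a 9)) - 90 * Ideal.Quotient.mk I (a 5) ^ 2 := by
    linear_combination s2 - 4 * he5
  have s3 : (10 : QQ) * Ideal.Quotient.mk I (a 3) =
      540 * (Ideal.Quotient.mk I (a 1) * Ideal.Quotient.mk I (a 9) ^ 2) - 270 * (Ideal.Quotient.mk I (a 5) ^ 2 * Ideal.Quotient.mk I (a 9)) +
        60 * (Ideal.Quotient.mk I (a 1) * Ideal.Quotient.mk I (a 5)) := by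
    linear_combination (-10 : QQ) * he6 + 3 * Ideal.Quotient.mk I (a 9) * s2 - 60 * Ideal.Quotient.mk I (a 1) * s10
  have s8 : (90 : QQ) * Ideal.Quotient.mk I (a 8) =
      -(540 * (Ideal.Quotient.mk I (a 1) * Ideal.Quotient.mk I (a 9) ^ 2)) + 270 * (Ideal.Quotient.mk I (a 5) ^ 2 * Ideal.Quotient.mk I (a 9)) -
        60 * (Ideal.Quotient.mk I (a 1) * Ideal.Quotient.mk I (a 5)) := by
    linear_combination 10 * he2 - s3
  have s4 : (2 : QQ) * Ideal.Quotient.mk I (a 4) =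
      -(180 * (Ideal.Quotient.mk I (a 1) * Ideal.Quotient.mk I (a 5) * Ideal.Quotient.mk I (a 9))) + 90 * Ideal.Quotient.mk I (a 5) ^ 3 -
        40 * Ideal.Quotient.mk I (a 1) ^ 2 := by
    linear_combination 10 * he3 - Ideal.Quotient.mk I (a 5) * s2 + 20 * Ideal.Quotient.mk I (a 1) * s6 - 2 * Ideal.Quotient.mk I (a 4) * hv
  have m11 : Ideal.Quotient.mk I (a 11) ∈ φ.range := by
    rw [s11]; exact mul_mem (by simpa using hnum 10) hx
  have m10 : Ideal.Quotient.mk I (a 10) ∈ φ.range := by rw [s10]; exact neg_mem hy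
  have m6 : Ideal.Quotient.mk I (a 6) ∈ φ.range := by
    rw [s6]; exact neg_mem (mul_mem (by simpa using hnum 2) hx)
  have m2 : Ideal.Quotient.mk I (a 2) ∈ φ.range := by
    apply scaled_mem (20 : ℚ) (by norm_num)
    rw [map_ofNat (algebraMap ℚ QQ) 20, s2]
    exact sub_mem (mul_mem (by simpa using hnum 180) (mul_mem hx hz))
      (mul_mem (by simpa using hnum 90) (pow_mem hy 2))
  have m7 : Ideal.Quotient.mk I (a 7) ∈ φ.range := by
    apply scaled_mem (12 : ℚ) (by norm_num)
    rw [map_ofNat (algebraMap ℚ QQ) 12, s7]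
    exact sub_mem (mul_mem (by simpa using hnum 90) (pow_mem hy 2))
      (mul_mem (by simpa using hnum 180) (mul_mem hx hz))
  have m12 : Ideal.Quotient.mk I (a 12) ∈ φ.range := by
    apply scaled_mem (36 : ℚ) (by norm_num)
    rw [map_ofNat (algebraMap ℚ QQ) 36, s12]
    exact sub_mem (mul_mem (by simpa using hnum 180) (mul_mem hx hz))
      (mul_mem (by simpa using hnum 90) (pow_mem hy 2))
  have m3 : Ideal.Quotient.mk I (a 3) ∈ φ.range := by
    apply scaled_mem (10 : ℚ) (by norm_num)
    rw [map_ofNat (algebraMap ℚ QQ) 10, s3]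
    exact add_mem (sub_mem (mul_mem (by simpa using hnum 540) (mul_mem hx (pow_mem hz 2)))
      (mul_mem (by simpa using hnum 270) (mul_mem (pow_mem hy 2) hz)))
      (mul_mem (by simpa using hnum 60) (mul_mem hx hy))
  have m8 : Ideal.Quotient.mk I (a 8) ∈ φ.range := by
    apply scaled_mem (90 : ℚ) (by norm_num)
    rw [map_ofNat (algebraMap ℚ QQ) 90, s8]
    exact sub_mem (add_mem (neg_mem (mul_mem (by simpa using hnum 540)
      (mul_mem hx (pow_mem hz 2))))
      (mul_mem (by simpa using hnum 270) (mul_mem (pow_mem hy 2) hz)))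
      (mul_mem (by simpa using hnum 60) (mul_mem hx hy))
  have m4 : Ideal.Quotient.mk I (a 4) ∈ φ.range := by
    apply scaled_mem (2 : ℚ) (by norm_num)
    rw [map_ofNat (algebraMap ℚ QQ) 2, s4]
    exact sub_mem (add_mem (neg_mem (mul_mem (by simpa using hnum 180)
      (mul_mem (mul_mem hx hy) hz)))
      (mul_mem (by simpa using hnum 90) (pow_mem hy 3)))
      (mul_mem (by simpa using hnum 40) (pow_mem hx 2))
  have hXmem : ∀ i : Fin 12, Ideal.Quotient.mk I (X i) ∈ φ.range := by
    intro i
    fin_cases i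
    · simpa [a] using hx
    · simpa [a] using m2
    · simpa [a] using m3
    · simpa [a] using m4
    · simpa [a] using hy
    · simpa [a] using m6
    · simpa [a] using m7
    · simpa [a] using m8
    · simpa [a] using hz
    · simpa [a] using m10
    · simpa [a] using m11
    · simpa [a] using m12
  intro q
  obtain ⟨p, rfl⟩ := Ideal.Quotient.mk_surjective q
  suffices h : Ideal.Quotient.mk I p ∈ φ.range by
    obtain ⟨s, hs⟩ := h; exact ⟨s, hs⟩
  induction p using MvPolynomial.induction_on with
  | C r =>
    have : algebraMap ℚ QQ r ∈ φ.range := hnum r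
    rw [← MvPolynomial.algebraMap_eq, Ideal.Quotient.mk_algebraMap]; exact this
  | add p q hp hq => rw [map_add]; exact add_mem hp hq
  | mul_X p i hp => rw [map_mul]; exact mul_mem hp (hXmem i)

/-- The chart `V₁₂` of the Mukai–Umemura threefold is isomorphic to affine 3-space
with coordinates `a₁, a₅, a₉`: the algebra map `ℚ[x,y,z] → R/I` is an isomorphism. -/
theorem stmt_18 : Function.Bijective φ := by
  exact ⟨Function.LeftInverse.injective (g := ψ') fun p => AlgHom.congr_fun left_inv p, surj⟩
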